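/- For every n ∈ ℕ one has t_3(4n+2) = 8·t_3(n-1) and t_3(4n+3) = 8·t_3(n), where t_3(-1) is set to 0. -/

import Mathlib

/-- The generating function `T(x) = ∑ (-1)^{s₂(n)} xⁿ = ∏ (1 - x^{2^j})`
of the Prouhet–Thue–Morse sequence. -/
noncomputable def T : PowerSeries ℤ :=
  PowerSeries.mk fun n => (-1) ^ (Nat.digits 2 n).sum

/-- `tE m x` is the coefficient of `x`-th power in `T(x)^m`, extended by `0`
for negative indices. -/
noncomputable def tE (m : ℕ) (x : ℤ) : ℤ :=
  if x < 0 then 0 else PowerSeries.coeff x.toNat (T ^ m)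

namespace TMAux

open PowerSeries

/-- The "even spread" operator, `D F = F(X²)`. -/
noncomputable def D (F : PowerSeries ℤ) : PowerSeries ℤ :=
  PowerSeries.mk fun n => if Even n then PowerSeries.coeff (n / 2) F else 0

lemma coeff_D (F : PowerSeries ℤ) (n : ℕ) :
    PowerSeries.coeff n (D F) = if Even n then PowerSeries.coeff (n / 2) F else 0 :=
  PowerSeries.coeff_mk _ _

lemma coeff_D_even (F : PowerSeries ℤ) (m : ℕ) :
    PowerSeries.coeff (2 * m) (D F) = PowerSeries.coeff m F := by
  have h : 2 * m / 2 = m := by omega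
  rw [coeff_D, if_pos ⟨m, by ring⟩, h]

lemma coeff_D_odd (F : PowerSeries ℤ) (m : ℕ) :
    PowerSeries.coeff (2 * m + 1) (D F) = 0 := by
  have h : ¬ Even (2 * m + 1) := by rw [Nat.even_iff]; omega
  rw [coeff_D, if_neg h]

lemma D_mul (F G : PowerSeries ℤ) : D (F * G) = D F * D G := by
  ext n
  rw [PowerSeries.coeff_mul, coeff_D]
  rcases Nat.even_or_odd n with ⟨m, rfl⟩ | ⟨m, rfl⟩
  · rw [if_pos ⟨m, rfl⟩]
    have hmm : (m + m) / 2 = m := by omega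
    rw [hmm, PowerSeries.coeff_mul]
    calc ∑ q ∈ Finset.HasAntidiagonal.antidiagonal m,
          PowerSeries.coeff q.1 F * PowerSeries.coeff q.2 G
        = ∑ q ∈ Finset.HasAntidiagonal.antidiagonal m,
            PowerSeries.coeff (2 * q.1) (D F) * PowerSeries.coeff (2 * q.2) (D G) := by
          refine Finset.sum_congr rfl fun q _ => ?_
          rw [coeff_D_even, coeff_D_even]
      _ = ∑ p ∈ (Finset.HasAntidiagonal.antidiagonal m).image (fun q : ℕ × ℕ => (2 * q.1, 2 * q.2)),
            PowerSeries.coeff p.1 (D F) * PowerSeries.coeff p.2 (D G) := by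
          rw [Finset.sum_image]
          intro x _ y _ h
          simp only [Prod.mk.injEq] at h
          exact Prod.ext (by omega) (by omega)
      _ = ∑ p ∈ Finset.HasAntidiagonal.antidiagonal (m + m),
            PowerSeries.coeff p.1 (D F) * PowerSeries.coeff p.2 (D G) := by
          apply Finset.sum_subset
          · intro p hp
            simp only [Finset.mem_image, Finset.HasAntidiagonal.mem_antidiagonal] at hp ⊢
            obtain ⟨q, hq, rfl⟩ := hp
            omega
          · intro p hp hnp
            simp only [Finset.mem_image, Finset.HasAntidiagonal.mem_antidiagonal] at hp hnp
            have h1 : ¬ Even p.1 := by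
              rintro ⟨a, ha⟩
              refine hnp ⟨(a, m - a), by omega, ?_⟩
              exact Prod.ext (by omega) (by omega)
            rw [coeff_D, if_neg h1, zero_mul]
  · rw [if_neg (by rw [Nat.even_iff]; omega)]
    symm
    apply Finset.sum_eq_zero
    intro p hp
    rw [Finset.HasAntidiagonal.mem_antidiagonal] at hp
    by_cases h1 : Even p.1
    · have h2 : ¬ Even p.2 := by
        rw [Nat.even_iff] at h1 ⊢
        omega
      rw [coeff_D G, if_neg h2, mul_zero]
    · rw [coeff_D F, if_neg h1, zero_mul]

lemma T_eq : T = (1 - PowerSeries.X) * D T := by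
  ext n
  rw [sub_mul, one_mul, map_sub]
  rcases Nat.even_or_odd n with ⟨m, rfl⟩ | ⟨m, rfl⟩
  · cases m with
    | zero =>
        simp [T, D, PowerSeries.coeff_zero_eq_constantCoeff, map_mul]
    | succ j =>
        rw [show j + 1 + (j + 1) = (2 * j + 1) + 1 by ring, PowerSeries.coeff_succ_X_mul,
          coeff_D_odd, sub_zero, show 2 * j + 1 + 1 = 2 * (j + 1) by ring, coeff_D_even]
        simp only [T, PowerSeries.coeff_mk]
        rw [Nat.digits_def' (by norm_num : (1:ℕ) < 2) (by omega : 0 < 2 * (j + 1))]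
        have h1 : 2 * (j + 1) % 2 = 0 := by omega
        have h2 : 2 * (j + 1) / 2 = j + 1 := by omega
        rw [h1, h2, List.sum_cons, Nat.zero_add]
  · rw [show 2 * m + 1 = (2 * m) + 1 by rfl, PowerSeries.coeff_succ_X_mul,
      coeff_D_odd, coeff_D_even, zero_sub]
    simp only [T, PowerSeries.coeff_mk]
    rw [Nat.digits_def' (by norm_num : (1:ℕ) < 2) (by omega : 0 < 2 * m + 1)]
    have h1 : (2 * m + 1) % 2 = 1 := by omega
    have h2 : (2 * m + 1) / 2 = m := by omega
    rw [h1, h2, List.sum_cons, pow_add, pow_one]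
    ring

lemma T3 : T ^ 3 = (1 - PowerSeries.X) ^ 3 * D (T ^ 3) := by
  have hD : D (T ^ 3) = (D T) ^ 3 := by
    rw [show T ^ 3 = T * T * T by ring, D_mul, D_mul]
    ring
  rw [hD, ← mul_pow, ← T_eq]

lemma coeff_X_pow_mul_lt (G : PowerSeries ℤ) {m k : ℕ} (h : m < k) :
    PowerSeries.coeff m (PowerSeries.X ^ k * G) = 0 :=
  (PowerSeries.X_pow_dvd_iff.mp ⟨G, rfl⟩) m h

lemma cube_expand (G : PowerSeries ℤ) :
    (1 - PowerSeries.X) ^ 3 * G =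
      G - (PowerSeries.X * G + PowerSeries.X * G + PowerSeries.X * G)
        + (PowerSeries.X ^ 2 * G + PowerSeries.X ^ 2 * G + PowerSeries.X ^ 2 * G)
        - PowerSeries.X ^ 3 * G := by
  ring

lemma coeff_cube (G : PowerSeries ℤ) (k : ℕ) :
    PowerSeries.coeff (k + 3) ((1 - PowerSeries.X) ^ 3 * G) =
      PowerSeries.coeff (k + 3) G - 3 * PowerSeries.coeff (k + 2) G
        + 3 * PowerSeries.coeff (k + 1) G - PowerSeries.coeff k G := by
  have e1 : PowerSeries.coeff (k + 3) (PowerSeries.X * G) = PowerSeries.coeff (k + 2) G := by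
    rw [show k + 3 = (k + 2) + 1 by ring, PowerSeries.coeff_succ_X_mul]
  have e2 : PowerSeries.coeff (k + 3) (PowerSeries.X ^ 2 * G)
      = PowerSeries.coeff (k + 1) G := by
    rw [show k + 3 = (k + 1) + 2 by ring, PowerSeries.coeff_X_pow_mul]
  have e3 : PowerSeries.coeff (k + 3) (PowerSeries.X ^ 3 * G) = PowerSeries.coeff k G := by
    rw [show k + 3 = k + 3 by ring, PowerSeries.coeff_X_pow_mul]
  rw [cube_expand, map_sub, map_add, map_sub, map_add, map_add, map_add, map_add, e1, e2, e3]
  ring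

lemma coeff_cube_zero (G : PowerSeries ℤ) :
    PowerSeries.coeff 0 ((1 - PowerSeries.X) ^ 3 * G) = PowerSeries.coeff 0 G := by
  simp [PowerSeries.coeff_zero_eq_constantCoeff, map_mul, map_pow]

lemma coeff_cube_one (G : PowerSeries ℤ) :
    PowerSeries.coeff 1 ((1 - PowerSeries.X) ^ 3 * G) =
      PowerSeries.coeff 1 G - 3 * PowerSeries.coeff 0 G := by
  have e1 : PowerSeries.coeff 1 (PowerSeries.X * G) = PowerSeries.coeff 0 G := by
    rw [show (1:ℕ) = 0 + 1 by ring, PowerSeries.coeff_succ_X_mul]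
  have e2 : PowerSeries.coeff 1 (PowerSeries.X ^ 2 * G) = 0 := coeff_X_pow_mul_lt G (by omega)
  have e3 : PowerSeries.coeff 1 (PowerSeries.X ^ 3 * G) = 0 := coeff_X_pow_mul_lt G (by omega)
  rw [cube_expand, map_sub, map_add, map_sub, map_add, map_add, map_add, map_add, e1, e2, e3]
  ring

lemma coeff_cube_two (G : PowerSeries ℤ) :
    PowerSeries.coeff 2 ((1 - PowerSeries.X) ^ 3 * G) =
      PowerSeries.coeff 2 G - 3 * PowerSeries.coeff 1 G + 3 * PowerSeries.coeff 0 G := by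
  have e1 : PowerSeries.coeff 2 (PowerSeries.X * G) = PowerSeries.coeff 1 G := by
    rw [show (2:ℕ) = 1 + 1 by ring, PowerSeries.coeff_succ_X_mul]
  have e2 : PowerSeries.coeff 2 (PowerSeries.X ^ 2 * G) = PowerSeries.coeff 0 G := by
    rw [show (2:ℕ) = 0 + 2 by ring, PowerSeries.coeff_X_pow_mul]
  have e3 : PowerSeries.coeff 2 (PowerSeries.X ^ 3 * G) = 0 := coeff_X_pow_mul_lt G (by omega)
  rw [cube_expand, map_sub, map_add, map_sub, map_add, map_add, map_add, map_add, e1, e2, e3]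
  ring

/-- Abbreviation for the coefficients of `T ^ 3`. -/
noncomputable def c (n : ℕ) : ℤ := PowerSeries.coeff n (T ^ 3)

lemma G0 : PowerSeries.coeff 0 (D (T ^ 3)) = c 0 := by
  have h := coeff_D_even (T ^ 3) 0
  rw [mul_zero] at h
  exact h

lemma G1 : PowerSeries.coeff 1 (D (T ^ 3)) = 0 := by
  simpa using coeff_D_odd (T ^ 3) 0

lemma G2 : PowerSeries.coeff 2 (D (T ^ 3)) = c 1 := by
  have h := coeff_D_even (T ^ 3) 1
  rw [show 2 * 1 = 2 by norm_num] at h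
  exact h

lemma c_zero : c 0 = 1 := by
  simp [c, T, PowerSeries.coeff_zero_eq_constantCoeff, map_pow]

lemma c_one : c 1 = -3 := by
  have h := coeff_cube_one (D (T ^ 3))
  rw [← T3, G1, G0, c_zero] at h
  simpa [c] using h

lemma c_two : c 2 = c 1 + 3 * c 0 := by
  have h := coeff_cube_two (D (T ^ 3))
  rw [← T3, G2, G1, G0] at h
  rw [show c 2 = PowerSeries.coeff 2 (T ^ 3) from rfl, h]
  ring

lemma odd_rec (n : ℕ) : c (2 * (n + 1) + 1) = -3 * c (n + 1) - c n := by
  have h := coeff_cube (D (T ^ 3)) (2 * n)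
  rw [← T3, show 2 * n + 3 = 2 * (n + 1) + 1 by ring, show 2 * n + 2 = 2 * (n + 1) by ring,
    coeff_D_odd, coeff_D_even, coeff_D_odd, coeff_D_even] at h
  simp only [c]
  rw [h]
  ring

lemma even_rec (n : ℕ) : c (2 * (n + 1)) = c (n + 1) + 3 * c n := by
  cases n with
  | zero =>
      simpa using c_two
  | succ j =>
      have h := coeff_cube (D (T ^ 3)) (2 * j + 1)
      rw [← T3, show 2 * j + 1 + 3 = 2 * (j + 2) by ring, show 2 * j + 1 + 2 = 2 * (j + 1) + 1 by ring,
        show 2 * j + 1 + 1 = 2 * (j + 1) by ring,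
        coeff_D_even, coeff_D_odd, coeff_D_even, coeff_D_odd] at h
      have e1 : 2 * (j + 1 + 1) = 2 * (j + 2) := by ring
      have e2 : j + 1 + 1 = j + 2 := by ring
      simp only [c, e1, e2]
      rw [h]
      ring

end TMAux

theorem stmt5 (n : ℕ) :
    PowerSeries.coeff (4 * n + 2) (T ^ 3) = 8 * tE 3 ((n : ℤ) - 1) ∧
    PowerSeries.coeff (4 * n + 3) (T ^ 3) = 8 * PowerSeries.coeff n (T ^ 3) := by
  open TMAux in
  constructor
  · cases n with
    | zero =>
        have h : PowerSeries.coeff 2 (T ^ 3) = 0 := by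
          have h2 := c_two
          rw [c_one, c_zero] at h2
          simpa [c] using h2
        norm_num [h, tE]
    | succ m =>
        have h2 := even_rec (2 * m + 2)
        rw [show 2 * m + 2 + 1 = 2 * (m + 1) + 1 by ring] at h2
        rw [show 2 * m + 2 = 2 * (m + 1) by ring] at h2
        have h3 := odd_rec m
        have h4 := even_rec m
        have key : c (2 * (2 * (m + 1) + 1)) = 8 * c m := by
          rw [h2, h3, h4]; ring
        have idx : 4 * (m + 1) + 2 = 2 * (2 * (m + 1) + 1) := by ring
        have hT : tE 3 (((m + 1 : ℕ) : ℤ) - 1) = c m := by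
          have e : ((m + 1 : ℕ) : ℤ) - 1 = (m : ℤ) := by push_cast; ring
          rw [e]
          simp only [tE]
          rw [if_neg (by omega : ¬ (m : ℤ) < 0)]
          simp [c]
        rw [show PowerSeries.coeff (4 * (m + 1) + 2) (T ^ 3) = c (4 * (m + 1) + 2) from rfl,
          idx, key, hT]
  · cases n with
    | zero =>
        have h := odd_rec 0
        have h3 : c (4 * 0 + 3) = 8 * c 0 := by
          rw [show 4 * 0 + 3 = 2 * (0 + 1) + 1 by norm_num, h, c_one, c_zero]
          norm_num
        exact h3
    | succ m =>
        have h2 := odd_rec (2 * m + 2)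
        rw [show 2 * m + 2 + 1 = 2 * (m + 1) + 1 by ring] at h2
        rw [show 2 * m + 2 = 2 * (m + 1) by ring] at h2
        have h3 := odd_rec m
        have h4 := even_rec m
        have key : c (2 * (2 * (m + 1) + 1) + 1) = 8 * c (m + 1) := by
          rw [h2, h3, h4]; ring
        have idx : 4 * (m + 1) + 3 = 2 * (2 * (m + 1) + 1) + 1 := by ring
        rw [show PowerSeries.coeff (4 * (m + 1) + 3) (T ^ 3) = c (4 * (m + 1) + 3) from rfl,
          idx, key]
        simp [c]
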